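/- arXiv:2406.16420 — 4 statements merged into one kernel-verified Lean document; each statement's English description precedes it below -/
import Mathlib

section
/- ($q$-multinomial normalization) For every $0<q<1$, every $k\ge 1$, every $\theta_1,\ldots,\theta_k>0$ and every $n\in\mathbb{N}$, the $q$-multinomial probability function of the first kind $f^B_{\mathcal X}(x_1,\ldots,x_k)=\binom{n}{x_1,\ldots,x_k}_q \prod_{j=1}^{k} \frac{\theta_j^{x_j} q^{\binom{x_j}{2}}}{\prod_{i=1}^{n-s_{j-1}}(1+\theta_j q^{i-1})}$, where $s_0=0$ and $s_j=\sum_{i=1}^{j}x_i$, sums to $1$ over all $(x_1,\ldots,x_k)\in\mathbb{N}^k$ with $\sum_{j=1}^k x_j\le n$. -/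
open scoped BigOperators

/-- The `q`-factorial `[n]_q! = ∏_{k=1}^n (1-q^k)/(1-q)`. -/
noncomputable def qFact (q : ℝ) (n : ℕ) : ℝ :=
  ∏ k ∈ Finset.range n, (1 - q ^ (k + 1)) / (1 - q)

lemma qFact_zero (q : ℝ) : qFact q 0 = 1 := by simp [qFact]

lemma qFact_succ (q : ℝ) (n : ℕ) :
    qFact q (n + 1) = qFact q n * ((1 - q ^ (n + 1)) / (1 - q)) :=
  Finset.prod_range_succ _ _

lemma qFact_pos {q : ℝ} (hq0 : 0 < q) (hq1 : q < 1) (n : ℕ) : 0 < qFact q n := by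
  refine Finset.prod_pos fun k _ => div_pos ?_ (by linarith)
  have : q ^ (k + 1) < 1 := pow_lt_one₀ hq0.le hq1 (by omega)
  linarith

lemma qFact_ne_zero {q : ℝ} (hq0 : 0 < q) (hq1 : q < 1) (n : ℕ) : qFact q n ≠ 0 :=
  (qFact_pos hq0 hq1 n).ne'

lemma qPascal {q : ℝ} (hq0 : 0 < q) (hq1 : q < 1) (m x : ℕ) :
    qFact q (m + x + 2) / (qFact q (x + 1) * qFact q (m + 1)) =
      q ^ (x + 1) * (qFact q (m + x + 1) / (qFact q (x + 1) * qFact q m)) +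
        qFact q (m + x + 1) / (qFact q x * qFact q (m + 1)) := by
  have h1 : qFact q (m + x + 2) = qFact q (m + x + 1) * ((1 - q ^ (m + x + 2)) / (1 - q)) :=
    qFact_succ q (m + x + 1)
  have h2 : qFact q (x + 1) = qFact q x * ((1 - q ^ (x + 1)) / (1 - q)) := qFact_succ q x
  have h3 : qFact q (m + 1) = qFact q m * ((1 - q ^ (m + 1)) / (1 - q)) := qFact_succ q m
  have hx := qFact_ne_zero hq0 hq1 x
  have hm := qFact_ne_zero hq0 hq1 m
  have hq : (1 : ℝ) - q ≠ 0 := by linarith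
  have hx1 : (1 : ℝ) - q ^ (x + 1) ≠ 0 := by
    have : q ^ (x + 1) < 1 := pow_lt_one₀ hq0.le hq1 (by omega); linarith
  have hm1 : (1 : ℝ) - q ^ (m + 1) ≠ 0 := by
    have : q ^ (m + 1) < 1 := pow_lt_one₀ hq0.le hq1 (by omega); linarith
  rw [h1, h2, h3]
  field_simp
  ring_nf

lemma expid (x : ℕ) : Nat.choose (x + 1) 2 = x + Nat.choose x 2 := by
  rw [Nat.choose_succ_succ, Nat.choose_one_right]

lemma qBinomThm {q : ℝ} (hq0 : 0 < q) (hq1 : q < 1) (n : ℕ) (θ : ℝ) :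
    ∑ x ∈ Finset.range (n + 1),
        qFact q n / (qFact q x * qFact q (n - x)) * (θ ^ x * q ^ Nat.choose x 2) =
      ∏ i ∈ Finset.range n, (1 + θ * q ^ i) := by
  induction n generalizing θ with
  | zero => simp [qFact_zero]
  | succ n ih =>
    have hfn := qFact_ne_zero hq0 hq1
    set S := ∑ x ∈ Finset.range (n + 1),
        qFact q n / (qFact q x * qFact q (n - x)) * ((θ * q) ^ x * q ^ Nat.choose x 2) with hSdef
    have hrhs : ∏ i ∈ Finset.range (n + 1), (1 + θ * q ^ i) = S + S * θ := by
      rw [Finset.prod_range_succ']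
      have h1 : (∏ i ∈ Finset.range n, (1 + θ * q ^ (i + 1)))
          = ∏ i ∈ Finset.range n, (1 + (θ * q) * q ^ i) := by
        apply Finset.prod_congr rfl; intro i _; ring
      rw [h1, ← ih (θ * q)]
      ring
    rw [hrhs]
    set S1 := ∑ x ∈ Finset.range n,
        qFact q n / (qFact q (x + 1) * qFact q (n - (x + 1))) *
          ((θ * q) ^ (x + 1) * q ^ Nat.choose (x + 1) 2) with hS1def
    set T1 := ∑ x ∈ Finset.range n,
        qFact q n / (qFact q x * qFact q (n - x)) * (θ ^ (x + 1) * q ^ Nat.choose (x + 1) 2)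
      with hT1def
    have hone : ∀ m : ℕ, qFact q m / (qFact q m * qFact q 0) = 1 := by
      intro m; rw [qFact_zero, mul_one, div_self (hfn m)]
    have hS : S = S1 + 1 := by
      rw [hSdef, Finset.sum_range_succ']
      simp [qFact_zero, hone, div_self (hfn n)]
      rfl
    have hT : S * θ = T1 + θ ^ (n + 1) * q ^ Nat.choose (n + 1) 2 := by
      rw [hSdef, Finset.sum_mul, Finset.sum_range_succ, Nat.sub_self, hone, one_mul]
      congr 1
      · apply Finset.sum_congr rfl; intro x _
        rw [expid, pow_add, mul_pow]; ring
      · rw [expid, pow_add, mul_pow]; ring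
    have hL : ∑ x ∈ Finset.range (n + 1 + 1),
        qFact q (n + 1) / (qFact q x * qFact q (n + 1 - x)) * (θ ^ x * q ^ Nat.choose x 2)
        = (∑ x ∈ Finset.range n,
            qFact q (n + 1) / (qFact q (x + 1) * qFact q (n + 1 - (x + 1))) *
              (θ ^ (x + 1) * q ^ Nat.choose (x + 1) 2))
          + θ ^ (n + 1) * q ^ Nat.choose (n + 1) 2 + 1 := by
      rw [Finset.sum_range_succ', Finset.sum_range_succ, Nat.sub_self, hone]
      simp [qFact_zero, hone, div_self (hfn (n + 1))]
    rw [hL, hT, hS]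
    have hmain : (∑ x ∈ Finset.range n,
        qFact q (n + 1) / (qFact q (x + 1) * qFact q (n + 1 - (x + 1))) *
          (θ ^ (x + 1) * q ^ Nat.choose (x + 1) 2)) = S1 + T1 := by
      rw [hS1def, hT1def, ← Finset.sum_add_distrib]
      apply Finset.sum_congr rfl; intro x hx
      have hxn : x < n := Finset.mem_range.mp hx
      obtain ⟨m, rfl⟩ : ∃ m, n = m + x + 1 := ⟨n - x - 1, by omega⟩
      rw [show m + x + 1 + 1 - (x + 1) = m + 1 by omega,
        show m + x + 1 - (x + 1) = m by omega,
        show m + x + 1 - x = m + 1 by omega,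
        show m + x + 1 + 1 = m + x + 2 by omega,
        qPascal hq0 hq1 m x]
      ring
    rw [hmain]
    ring


/-- The `q`-multinomial coefficient
`(n choose x₁,…,x_k)_q = [n]_q!/([x₁]_q! ⋯ [x_k]_q! [n-s_k]_q!)`. -/
noncomputable def qMultinomCoeff (q : ℝ) (n : ℕ) {k : ℕ} (x : Fin k → ℕ) : ℝ :=
  qFact q n / ((∏ j, qFact q (x j)) * qFact q (n - ∑ j, x j))

/-- The `q`-multinomial probability function of the first kind
`f(x₁,…,x_k) = (n choose x₁,…,x_k)_q ∏_j θ_j^{x_j} q^{C(x_j,2)} / ∏_{i=1}^{n-s_{j-1}} (1+θ_j q^{i-1})`,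
where `s_{j-1} = x₁ + ⋯ + x_{j-1}`. -/
noncomputable def qMultinomPF (q : ℝ) (n : ℕ) {k : ℕ} (θ : Fin k → ℝ) (x : Fin k → ℕ) : ℝ :=
  qMultinomCoeff q n x *
    ∏ j, (θ j ^ x j * q ^ (x j * (x j - 1) / 2) /
      ∏ i ∈ Finset.range (n - ∑ i ∈ Finset.univ.filter (· < j), x i), (1 + θ j * q ^ i))

lemma filter_lt_zero_sum {k : ℕ} (x : Fin (k + 1) → ℕ) :
    ∑ i ∈ Finset.univ.filter (· < (0 : Fin (k + 1))), x i = 0 := by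
  simp [Fin.not_lt_zero]

lemma filter_lt_succ_sum {k : ℕ} (x : Fin (k + 1) → ℕ) (j : Fin k) :
    ∑ i ∈ Finset.univ.filter (· < j.succ), x i
      = x 0 + ∑ i ∈ Finset.univ.filter (· < j), x i.succ := by
  rw [Finset.sum_filter, Finset.sum_filter, Fin.sum_univ_succ]
  simp [Fin.succ_lt_succ_iff, Fin.succ_pos]

lemma cons_filter_sum {k : ℕ} (a n : ℕ) (y : Fin k → ℕ) (j : Fin k) :
    n - ∑ i ∈ Finset.univ.filter (· < j.succ), Fin.cons a y i
      = n - a - ∑ i ∈ Finset.univ.filter (· < j), y i := by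
  rw [filter_lt_succ_sum, Nat.sub_sub]
  simp [Fin.cons_zero, Fin.cons_succ]

lemma prod_one_add_ne_zero {q : ℝ} (hq0 : 0 < q) {c : ℝ} (hc : 0 < c) (n : ℕ) :
    (∏ i ∈ Finset.range n, (1 + c * q ^ i)) ≠ 0 := by
  refine (Finset.prod_pos fun i _ => ?_).ne'
  have : 0 < c * q ^ i := mul_pos hc (pow_pos hq0 i)
  linarith

set_option maxHeartbeats 1600000 in
lemma qMultinomPF_cons {q : ℝ} (hq0 : 0 < q) (hq1 : q < 1) {k n : ℕ} (θ : Fin (k + 1) → ℝ)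
    (hθ : ∀ j, 0 < θ j) (a : ℕ) (y : Fin k → ℕ) :
    qMultinomPF q n θ (Fin.cons a y) =
      qFact q n / (qFact q a * qFact q (n - a)) * (θ 0 ^ a * q ^ (a * (a - 1) / 2)) /
          (∏ i ∈ Finset.range n, (1 + θ 0 * q ^ i)) *
        qMultinomPF q (n - a) (Fin.tail θ) y := by
  have hfn := qFact_ne_zero hq0 hq1
  unfold qMultinomPF qMultinomCoeff
  rw [Fin.sum_univ_succ, Fin.prod_univ_succ, Fin.prod_univ_succ]
  simp only [Fin.cons_zero, Fin.cons_succ, cons_filter_sum, filter_lt_zero_sum, Nat.sub_zero,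
    Fin.tail]
  rw [← Nat.sub_sub]
  have h1 : (∏ x : Fin k, qFact q (y x)) ≠ 0 :=
    Finset.prod_ne_zero_iff.mpr fun i _ => hfn _
  have h2 : (∏ x : Fin k,
      ∏ i ∈ Finset.range (n - a - ∑ x ∈ Finset.filter (fun x_1 => x_1 < x) Finset.univ, y x),
        (1 + θ x.succ * q ^ i)) ≠ 0 :=
    Finset.prod_ne_zero_iff.mpr fun i _ => prod_one_add_ne_zero hq0 (hθ i.succ) _
  field_simp [hfn, h1, h2, prod_one_add_ne_zero hq0 (hθ 0) n]

lemma normalization_aux {q : ℝ} (hq0 : 0 < q) (hq1 : q < 1) :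
    ∀ (k : ℕ) (θ : Fin k → ℝ), (∀ j, 0 < θ j) → ∀ n : ℕ,
      ∑ x ∈ (Fintype.piFinset fun _ : Fin k => Finset.range (n + 1)).filter
          (fun x => ∑ j, x j ≤ n), qMultinomPF q n θ x = 1 := by
  intro k
  induction k with
  | zero =>
    intro θ hθ n
    have hset : ((Fintype.piFinset fun _ : Fin 0 => Finset.range (n + 1)).filter
        (fun x => ∑ j, x j ≤ n)) = {fun i => i.elim0} := by
      ext x
      simp only [Finset.mem_filter, Fintype.mem_piFinset, Finset.mem_singleton]
      constructor
      · intro _; exact Subsingleton.elim _ _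
      · intro h; exact ⟨fun i => i.elim0, by simp⟩
    rw [hset, Finset.sum_singleton]
    simp [qMultinomPF, qMultinomCoeff, div_self (qFact_ne_zero hq0 hq1 n)]
  | succ k ih =>
    intro θ hθ n
    have hfn := qFact_ne_zero hq0 hq1
    have hD := prod_one_add_ne_zero hq0 (hθ 0) n
    set T : ℕ → Finset (Fin k → ℕ) := fun a =>
      (Fintype.piFinset fun _ : Fin k => Finset.range (n - a + 1)).filter
        (fun y => ∑ j, y j ≤ n - a) with hT
    have hbij : ∑ x ∈ (Fintype.piFinset fun _ : Fin (k + 1) => Finset.range (n + 1)).filter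
          (fun x => ∑ j, x j ≤ n), qMultinomPF q n θ x
        = ∑ p ∈ (Finset.range (n + 1)).sigma T, qMultinomPF q n θ (Fin.cons p.1 p.2) := by
      refine Finset.sum_nbij' (fun x => (⟨x 0, Fin.tail x⟩ : Σ _ : ℕ, (Fin k → ℕ)))
        (fun p => Fin.cons p.1 p.2) ?_ ?_ ?_ ?_ ?_
      · intro x hx
        show (⟨x 0, Fin.tail x⟩ : Σ _ : ℕ, (Fin k → ℕ)) ∈ (Finset.range (n + 1)).sigma T
        rw [Finset.mem_filter, Fintype.mem_piFinset] at hx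
        obtain ⟨hmem, hsum⟩ := hx
        have hsum' : ∑ j, x j = x 0 + ∑ j : Fin k, x j.succ := Fin.sum_univ_succ x
        have hx0 : x 0 ≤ n := by
          have : x 0 + ∑ j : Fin k, x j.succ ≤ n := by omega
          omega
        rw [Finset.mem_sigma]
        dsimp only
        constructor
        · exact Finset.mem_range.mpr (by omega)
        · rw [hT, Finset.mem_filter, Fintype.mem_piFinset]
          have htail : ∑ j : Fin k, Fin.tail x j = ∑ j : Fin k, x j.succ := rfl
          constructor
          · intro j
            rw [Finset.mem_range]
            have hle : x j.succ ≤ ∑ i : Fin k, x i.succ :=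
              Finset.single_le_sum (f := fun i : Fin k => x i.succ)
                (fun i _ => Nat.zero_le _) (Finset.mem_univ j)
            have : Fin.tail x j = x j.succ := rfl
            omega
          · rw [htail]; omega
      · intro p hp
        show Fin.cons (α := fun _ => ℕ) p.1 p.2 ∈ _
        rw [Finset.mem_sigma, Finset.mem_range, hT, Finset.mem_filter,
          Fintype.mem_piFinset] at hp
        obtain ⟨ha, hmem, hsum⟩ := hp
        rw [Finset.mem_filter, Fintype.mem_piFinset]
        have hsum' : ∑ j, Fin.cons (α := fun _ => ℕ) p.1 p.2 j = p.1 + ∑ j : Fin k, p.2 j := by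
          rw [Fin.sum_univ_succ]; simp
        constructor
        · intro j
          refine Fin.cases ?_ ?_ j
          · simpa using ha
          · intro i
            simp only [Fin.cons_succ, Finset.mem_range]
            have := Finset.mem_range.mp (hmem i)
            omega
        · omega
      · intro x _; exact Fin.cons_self_tail x
      · intro p _; simp
      · intro x _; rw [Fin.cons_self_tail]
    rw [hbij, Finset.sum_sigma]
    have hinner : ∀ a ∈ Finset.range (n + 1),
        (∑ y ∈ T a, qMultinomPF q n θ (Fin.cons a y))
          = qFact q n / (qFact q a * qFact q (n - a)) *
              (θ 0 ^ a * q ^ (a * (a - 1) / 2)) /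
            (∏ i ∈ Finset.range n, (1 + θ 0 * q ^ i)) := by
      intro a _
      have : ∀ y ∈ T a, qMultinomPF q n θ (Fin.cons a y)
          = qFact q n / (qFact q a * qFact q (n - a)) *
              (θ 0 ^ a * q ^ (a * (a - 1) / 2)) /
            (∏ i ∈ Finset.range n, (1 + θ 0 * q ^ i)) *
            qMultinomPF q (n - a) (Fin.tail θ) y :=
        fun y _ => qMultinomPF_cons hq0 hq1 θ hθ a y
      rw [Finset.sum_congr rfl this, ← Finset.mul_sum, hT,
        ih (Fin.tail θ) (fun j => hθ j.succ) (n - a), mul_one]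
    rw [Finset.sum_congr rfl hinner, ← Finset.sum_div]
    have hexp : ∀ a : ℕ, a * (a - 1) / 2 = Nat.choose a 2 :=
      fun a => (Nat.choose_two_right a).symm
    simp_rw [hexp]
    rw [qBinomThm hq0 hq1 n (θ 0), div_self hD]

/-- **q-multinomial normalization**: the `q`-multinomial probability function of the first
kind sums to `1` over all `(x₁,…,x_k) ∈ ℕ^k` with `x₁ + ⋯ + x_k ≤ n`. -/
theorem qMultinomial_normalization (q : ℝ) (hq0 : 0 < q) (hq1 : q < 1)
    (k : ℕ) (hk : 1 ≤ k) (θ : Fin k → ℝ) (hθ : ∀ j, 0 < θ j) (n : ℕ) :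
    ∑ x ∈ (Fintype.piFinset fun _ : Fin k => Finset.range (n + 1)).filter
        (fun x => ∑ j, x j ≤ n),
      qMultinomPF q n θ x = 1 :=
  normalization_aux hq0 hq1 k θ hθ n
end

section
/- (Discrete limit: $q$-multinomial to multiple Heine) Fix $0<q<1$, $k\ge 1$, $\lambda_1,\ldots,\lambda_k>0$, and set $\theta_j=\lambda_j(1-q)$ for $j=1,\ldots,k$. Then for every fixed $(x_1,\ldots,x_k)\in\mathbb{N}^k$, $\lim_{n\to\infty} \binom{n}{x_1,\ldots,x_k}_q \prod_{j=1}^{k} \frac{\theta_j^{x_j} q^{\binom{x_j}{2}}}{\prod_{i=1}^{n-s_{j-1}}(1+\theta_j q^{i-1})} = \prod_{j=1}^{k} \frac{q^{\binom{x_j}{2}} \lambda_j^{x_j}}{[x_j]_q!}\prod_{i=1}^{\infty}\left(1+\lambda_j(1-q)q^{i-1}\right)^{-1}$, where $s_0=0$ and $s_j=\sum_{i=1}^{j}x_i$. -/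
open scoped BigOperators

lemma multipliable_aux {q c : ℝ} (hq0 : 0 < q) (hq1 : q < 1) (hc : 0 ≤ c) :
    Multipliable (fun i : ℕ => 1 + c * q ^ i) := by
  refine Real.multipliable_of_summable_log (fun i => by positivity) ?_
  refine Summable.of_nonneg_of_le (fun i => Real.log_nonneg
      (le_add_of_nonneg_right (mul_nonneg hc (pow_pos hq0 i).le)))
    (fun i => ?_) ((summable_geometric_of_lt_one hq0.le hq1).mul_left c)
  have h := Real.log_le_sub_one_of_pos (x := 1 + c * q ^ i) (by positivity)
  linarith

set_option maxHeartbeats 1000000 in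
/-- **Discrete limit: q-multinomial to multiple Heine.** With `θ_j = λ_j (1-q)` fixed,
for every fixed `(x₁,…,x_k)` the q-multinomial p.f. tends, as `n → ∞`, to the
multiple Heine p.f. `∏_j q^{C(x_j,2)} λ_j^{x_j} / [x_j]_q! ∏_{i=1}^∞ (1+λ_j(1-q)q^{i-1})⁻¹`. -/
theorem qMultinomial_tendsto_multipleHeine (q : ℝ) (hq0 : 0 < q) (hq1 : q < 1)
    (k : ℕ) (hk : 1 ≤ k) (lam : Fin k → ℝ) (hlam : ∀ j, 0 < lam j)
    (θ : Fin k → ℝ) (hθ : ∀ j, θ j = lam j * (1 - q)) (x : Fin k → ℕ) :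
    Filter.Tendsto (fun n : ℕ => qMultinomPF q n θ x) Filter.atTop
      (nhds (∏ j, (q ^ (x j * (x j - 1) / 2) * lam j ^ x j / qFact q (x j)) *
        (∏' i : ℕ, (1 + lam j * (1 - q) * q ^ i))⁻¹)) := by
  have h1q : (0:ℝ) < 1 - q := by linarith
  have hθpos : ∀ j, 0 < θ j := fun j => by rw [hθ]; exact mul_pos (hlam j) h1q
  set s : ℕ := ∑ j, x j with hs
  set t : Fin k → ℕ := fun j => ∑ i ∈ Finset.univ.filter (· < j), x i with ht
  set P : Fin k → ℝ := fun j => ∏' i : ℕ, (1 + θ j * q ^ i) with hP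
  have hMult : ∀ j, Multipliable (fun i : ℕ => 1 + θ j * q ^ i) :=
    fun j => multipliable_aux hq0 hq1 (hθpos j).le
  have hPge : ∀ j, (1:ℝ) ≤ P j := by
    intro j
    have hple : ∀ n : ℕ, (1:ℝ) ≤ ∏ i ∈ Finset.range n, (1 + θ j * q ^ i) := by
      intro n
      calc (1:ℝ) = ∏ _i ∈ Finset.range n, (1:ℝ) := by simp
        _ ≤ ∏ i ∈ Finset.range n, (1 + θ j * q ^ i) :=
          Finset.prod_le_prod (fun i _ => zero_le_one)
            (fun i _ => le_add_of_nonneg_right (mul_nonneg (hθpos j).le (pow_pos hq0 i).le))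
    exact ge_of_tendsto' ((hMult j).hasProd.tendsto_prod_nat) hple
  have hPne : ∀ j, P j ≠ 0 := fun j => by linarith [hPge j]
  have hQ : ∀ j, Filter.Tendsto
      (fun n : ℕ => ∏ i ∈ Finset.range (n - t j), (1 + θ j * q ^ i))
      Filter.atTop (nhds (P j)) :=
    fun j => ((hMult j).hasProd.tendsto_prod_nat).comp (Filter.tendsto_sub_atTop_nat (t j))
  -- the range-s product
  have hA : Filter.Tendsto
      (fun n : ℕ => ∏ i ∈ Finset.range s, (1 - q ^ (n - s + i + 1)) / (1 - q))
      Filter.atTop (nhds ((1 / (1 - q)) ^ s)) := by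
    have : ((1 / (1 - q)) ^ s : ℝ) = ∏ _i ∈ Finset.range s, (1 : ℝ) / (1 - q) := by
      simp
    rw [this]
    refine tendsto_finset_prod _ (fun i _ => ?_)
    have hidx : Filter.Tendsto (fun n : ℕ => n - s + i + 1) Filter.atTop Filter.atTop :=
      Filter.tendsto_atTop_mono (fun n => by omega) (Filter.tendsto_sub_atTop_nat s)
    have h0 : Filter.Tendsto (fun n : ℕ => q ^ (n - s + i + 1)) Filter.atTop (nhds 0) :=
      (tendsto_pow_atTop_nhds_zero_of_lt_one hq0.le hq1).comp hidx
    have hc : Filter.Tendsto (fun _ : ℕ => (1:ℝ)) Filter.atTop (nhds 1) := tendsto_const_nhds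
    have := (hc.sub h0).div_const (1 - q)
    simpa using this
  have hQall : Filter.Tendsto
      (fun n : ℕ => ∏ j, (θ j ^ x j * q ^ (x j * (x j - 1) / 2) /
        ∏ i ∈ Finset.range (n - t j), (1 + θ j * q ^ i)))
      Filter.atTop (nhds (∏ j, (θ j ^ x j * q ^ (x j * (x j - 1) / 2) / P j))) :=
    tendsto_finset_prod _ (fun j _ => Filter.Tendsto.div tendsto_const_nhds (hQ j) (hPne j))
  have hmain := (hA.mul_const ((∏ j, qFact q (x j))⁻¹)).mul hQall
  have hL : (∏ j, (q ^ (x j * (x j - 1) / 2) * lam j ^ x j / qFact q (x j)) *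
        (∏' i : ℕ, (1 + lam j * (1 - q) * q ^ i))⁻¹)
      = (1 / (1 - q)) ^ s * (∏ j, qFact q (x j))⁻¹ *
        ∏ j, (θ j ^ x j * q ^ (x j * (x j - 1) / 2) / P j) := by
    rw [show ((1:ℝ) / (1 - q)) ^ s = ∏ j, ((1:ℝ) / (1 - q)) ^ (x j) from
      (Finset.prod_pow_eq_pow_sum _ _ _).symm, ← Finset.prod_inv_distrib,
      ← Finset.prod_mul_distrib, ← Finset.prod_mul_distrib]
    refine Finset.prod_congr rfl fun j _ => ?_
    have hPj : (∏' i : ℕ, (1 + lam j * (1 - q) * q ^ i)) = P j := by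
      simp only [hP, hθ, mul_assoc]
    rw [hPj, hθ j]
    have h1 := (qFact_pos hq0 hq1 (x j)).ne'
    have h2 := hPne j
    field_simp [mul_pow]
    rw [← mul_pow, one_div, inv_mul_cancel_left₀ h1q.ne']
  rw [hL]
  refine Filter.Tendsto.congr' ?_ hmain
  filter_upwards [Filter.eventually_ge_atTop s] with n hn
  obtain ⟨m, rfl⟩ : ∃ m, n = m + s := ⟨n - s, by omega⟩
  have hsplit : qFact q (m + s) = qFact q m * ∏ i ∈ Finset.range s, (1 - q ^ (m + i + 1)) / (1 - q) := by
    simp only [qFact, Finset.prod_range_add]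
  have h1 := (qFact_pos hq0 hq1 m).ne'
  have h2 : (∏ j, qFact q (x j)) ≠ 0 :=
    Finset.prod_ne_zero_iff.2 fun j _ => (qFact_pos hq0 hq1 (x j)).ne'
  have h3 : ∀ (j : Fin k) (N : ℕ), (0:ℝ) < ∏ i ∈ Finset.range N, (1 + θ j * q ^ i) :=
    fun j N => Finset.prod_pos fun i _ => by nlinarith [mul_pos (hθpos j) (pow_pos hq0 i)]
  have h3' : (∏ j : Fin k, ∏ i ∈ Finset.range (m + s - t j), (1 + θ j * q ^ i)) ≠ 0 :=
    (Finset.prod_pos fun j _ => h3 j _).ne'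
  simp only [qMultinomPF, qMultinomCoeff, ← hs, ← ht, Nat.add_sub_cancel, hsplit]
  rw [Finset.prod_div_distrib, Finset.prod_div_distrib]
  field_simp [h3']
end

section
/- (Conditional distributions in the $q$-multinomial) Let $0<q<1$, $\theta_1,\ldots,\theta_k>0$, $n\in\mathbb{N}$, and let $f^B_{\mathcal X}$ be the $q$-multinomial probability function of the first kind with $k\ge 2$ components. Then the joint probability function factorizes as $f^B_{\mathcal X}(x_1,\ldots,x_k) = \left[\binom{n}{x_1}_q \frac{\theta_1^{x_1} q^{\binom{x_1}{2}}}{\prod_{i=1}^{n}(1+\theta_1 q^{i-1})}\right] \prod_{j=2}^{k} \left[\binom{n-s_{j-1}}{x_j}_q \frac{\theta_j^{x_j} q^{\binom{x_j}{2}}}{\prod_{i=1}^{n-s_{j-1}}(1+\theta_j q^{i-1})}\right]$, where $s_{j-1}=\sum_{i=1}^{j-1}x_i$; i.e. the conditional distribution of $X_j$ given $X_1=x_1,\ldots,X_{j-1}=x_{j-1}$ is $q$-binomial of the first kind with parameters $n-s_{j-1}$ and $\theta_j$. -/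
open scoped BigOperators

/-- The `q`-binomial coefficient. -/
noncomputable def qBinom (q : ℝ) (n x : ℕ) : ℝ :=
  qFact q n / (qFact q x * qFact q (n - x))

lemma filter_lt_succ {k : ℕ} (y : Fin (k+1) → ℕ) (j : Fin k) :
    ∑ i ∈ Finset.univ.filter (· < j.succ), y i
      = y 0 + ∑ i ∈ Finset.univ.filter (· < j), y (Fin.succ i) := by
  rw [Finset.sum_filter, Finset.sum_filter, Fin.sum_univ_succ]
  simp [Fin.succ_pos, Fin.succ_lt_succ_iff]

lemma key {q : ℝ} (hq0 : 0 < q) (hq1 : q < 1) :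
    ∀ (k : ℕ) (n : ℕ) (x : Fin k → ℕ), ∑ j, x j ≤ n →
      ∏ j, qBinom q (n - ∑ i ∈ Finset.univ.filter (· < j), x i) (x j)
        = qFact q n / ((∏ j, qFact q (x j)) * qFact q (n - ∑ j, x j)) := by
  intro k
  induction k with
  | zero =>
    intro n x hx
    simp [div_self (qFact_pos hq0 hq1 n).ne']
  | succ k ih =>
    intro n x hx
    have hsum : ∑ j, x j = x 0 + ∑ j : Fin k, x (Fin.succ j) := Fin.sum_univ_succ x
    have hx0 : x 0 + ∑ j : Fin k, x (Fin.succ j) ≤ n := hsum ▸ hx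
    have hx' : ∑ j : Fin k, x (Fin.succ j) ≤ n - x 0 := by omega
    rw [Fin.prod_univ_succ]
    have h0 : (Finset.univ.filter (· < (0 : Fin (k+1)))) = ∅ := by
      ext i; simp [Fin.not_lt_zero]
    have htail : ∀ j : Fin k,
        qBinom q (n - ∑ i ∈ Finset.univ.filter (· < Fin.succ j), x i) (x (Fin.succ j))
          = qBinom q ((n - x 0) - ∑ i ∈ Finset.univ.filter (· < j), x (Fin.succ i))
              (x (Fin.succ j)) := by
      intro j
      rw [filter_lt_succ, Nat.sub_add_eq]
    rw [Finset.prod_congr rfl (fun j _ => htail j), ih (n - x 0) (fun j => x (Fin.succ j)) hx']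
    rw [h0]
    simp only [Finset.sum_empty, Nat.sub_zero]
    rw [Fin.prod_univ_succ (fun j => qFact q (x j)), hsum]
    have hsub : n - x 0 - ∑ j : Fin k, x (Fin.succ j) = n - (x 0 + ∑ j : Fin k, x (Fin.succ j)) := by
      omega
    rw [hsub]
    unfold qBinom
    have h1 := (qFact_pos hq0 hq1 (x 0)).ne'
    have h2 := (qFact_pos hq0 hq1 (n - x 0)).ne'
    have h3 := (qFact_pos hq0 hq1 (n - (x 0 + ∑ j : Fin k, x (Fin.succ j)))).ne'
    have h4 : (∏ j : Fin k, qFact q (x (Fin.succ j))) ≠ 0 :=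
      Finset.prod_ne_zero_iff.mpr fun j _ => (qFact_pos hq0 hq1 _).ne'
    field_simp

/-- **Conditional distributions in the q-multinomial**: the joint p.f. factorizes into a
product of `q`-binomial p.f.'s of the first kind, the `j`-th with parameters
`n - s_{j-1}` and `θ_j`, where `s_{j-1} = ∑_{i<j} x_i`. -/
theorem qMultinomial_factorization (q : ℝ) (hq0 : 0 < q) (hq1 : q < 1)
    (k : ℕ) (hk : 2 ≤ k) (θ : Fin k → ℝ) (hθ : ∀ j, 0 < θ j) (n : ℕ)
    (x : Fin k → ℕ) (hx : ∑ j, x j ≤ n) :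
    qMultinomPF q n θ x =
      ∏ j, (qBinom q (n - ∑ i ∈ Finset.univ.filter (· < j), x i) (x j) *
        (θ j ^ x j * q ^ (x j * (x j - 1) / 2)) /
        ∏ i ∈ Finset.range (n - ∑ i ∈ Finset.univ.filter (· < j), x i), (1 + θ j * q ^ i)) := by
  unfold qMultinomPF qMultinomCoeff
  rw [← key hq0 hq1 k n x hx, ← Finset.prod_mul_distrib]
  apply Finset.prod_congr rfl
  intro j _
  ring
end

section
/- (Mean of the deformed Heine variable) Let $0<q<1$, $\lambda>0$, and let $X$ follow the Heine distribution with probability function $f_X^H(x)= \frac{q^{\binom{x}{2}}\lambda^x}{[x]_q!}\prod_{i=1}^{\infty}(1+\lambda(1-q)q^{i-1})^{-1}$, $x=0,1,2,\ldots$. Then the mean of the deformed random variable $[X]_{1/q}$ is $E\big([X]_{1/q}\big)=\sum_{x=0}^{\infty}[x]_{1/q}\,f_X^H(x)=\lambda$. -/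
open scoped BigOperators
open Filter Finset Topology

noncomputable def hP (q : ℝ) (k : ℕ) : ℝ := ∏ j ∈ Finset.range k, (1 - q ^ (j + 1))

noncomputable def hC (q t : ℝ) (k : ℕ) : ℝ := q ^ (k * (k - 1) / 2) * t ^ k / hP q k

noncomputable def hT (q t : ℝ) : ℝ := ∑' k, hC q t k

section lemmas
variable {q t : ℝ} (hq0 : 0 < q) (hq1 : q < 1)
include hq0 hq1

lemma one_sub_pow_pos (k : ℕ) : 0 < 1 - q ^ (k + 1) :=
  sub_pos.2 (pow_lt_one₀ hq0.le hq1 (Nat.succ_ne_zero k))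

lemma hP_pos (k : ℕ) : 0 < hP q k :=
  Finset.prod_pos fun j _ => one_sub_pow_pos hq0 hq1 j

omit hq0 hq1 in
lemma hP_succ (k : ℕ) : hP q (k + 1) = hP q k * (1 - q ^ (k + 1)) :=
  Finset.prod_range_succ _ _

omit hq0 hq1 in
lemma exp_succ (k : ℕ) : (k + 1) * ((k + 1) - 1) / 2 = k * (k - 1) / 2 + k := by
  rw [← Nat.choose_two_right, ← Nat.choose_two_right, Nat.choose_succ_succ,
    Nat.choose_one_right, Nat.add_comm]

omit hq0 hq1 in
lemma hC_zero : hC q t 0 = 1 := by simp [hC, hP]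

lemma hC_succ (k : ℕ) :
    hC q t (k + 1) = (t * q ^ k / (1 - q ^ (k + 1))) * hC q t k := by
  have h1 := (one_sub_pow_pos hq0 hq1 k).ne'
  have h2 := (hP_pos hq0 hq1 k).ne'
  simp only [hC, exp_succ, hP_succ (q := q), pow_add, pow_succ]
  field_simp

lemma hC_nonneg (ht : 0 ≤ t) (k : ℕ) : 0 ≤ hC q t k :=
  div_nonneg (mul_nonneg (pow_nonneg hq0.le _) (pow_nonneg ht _)) (hP_pos hq0 hq1 k).le

lemma hC_summable (t : ℝ) : Summable (hC q t) := by
  have hq' : (0:ℝ) < 1 - q := sub_pos.2 hq1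
  have h1 : Tendsto (fun n : ℕ => |t| * q ^ n) atTop (𝓝 0) := by
    simpa using (tendsto_pow_atTop_nhds_zero_of_lt_one hq0.le hq1).const_mul |t|
  have h2 : ∀ᶠ n : ℕ in atTop, |t| * q ^ n < (1 - q) / 2 :=
    h1.eventually (gt_mem_nhds (by positivity))
  refine summable_of_ratio_norm_eventually_le (r := 1/2) (by norm_num) ?_
  filter_upwards [h2] with n hn
  have hpos := one_sub_pow_pos hq0 hq1 n
  rw [hC_succ hq0 hq1 n, norm_mul]
  apply mul_le_mul_of_nonneg_right _ (norm_nonneg _)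
  rw [Real.norm_eq_abs, abs_div, abs_mul, abs_of_pos hpos, abs_of_pos (pow_pos hq0 n)]
  rw [div_le_iff₀ hpos]
  have hq2 : q ^ (n + 1) ≤ q := by
    calc q ^ (n+1) ≤ q ^ 1 := pow_le_pow_of_le_one hq0.le hq1.le (by omega)
      _ = q := pow_one q
  nlinarith

end lemmas

section more
variable {q t : ℝ} (hq0 : 0 < q) (hq1 : q < 1)
include hq0 hq1

omit hq0 hq1 in
lemma hC_scale (s : ℝ) (k : ℕ) : hC q (s * t) k = s ^ k * hC q t k := by
  simp only [hC, mul_pow]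
  ring

lemma hC_diff (k : ℕ) :
    hC q t (k + 1) - hC q (q * t) (k + 1) = t * hC q (q * t) k := by
  have h1 := (one_sub_pow_pos hq0 hq1 k).ne'
  rw [hC_succ hq0 hq1, hC_succ hq0 hq1, hC_scale (s := q)]
  field_simp
  ring

lemma hT_funeq : hT q t = (1 + t) * hT q (q * t) := by
  have hs1 : Summable (hC q t) := hC_summable hq0 hq1 t
  have hs2 : Summable (hC q (q * t)) := hC_summable hq0 hq1 (q * t)
  have hd : Summable (fun k => hC q t k - hC q (q * t) k) := hs1.sub hs2
  have key : ∑' k, (hC q t k - hC q (q * t) k) = t * hT q (q * t) := by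
    rw [Summable.tsum_eq_zero_add hd]
    simp only [hC_zero, sub_self, zero_add]
    calc ∑' k, (hC q t (k + 1) - hC q (q * t) (k + 1))
        = ∑' k, t * hC q (q * t) k := tsum_congr fun k => hC_diff hq0 hq1 k
      _ = t * hT q (q * t) := by rw [tsum_mul_left]; rfl
  have hts : ∑' k, (hC q t k - hC q (q * t) k) = hT q t - hT q (q * t) := by
    rw [Summable.tsum_sub hs1 hs2]; rfl
  have h2 : hT q t - hT q (q * t) = t * hT q (q * t) := by rw [← hts]; exact key
  linarith [h2]

lemma hT_ge_one (ht : 0 ≤ t) : 1 ≤ hT q t := by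
  have := Summable.le_tsum (hC_summable hq0 hq1 t) 0 (fun j _ => hC_nonneg hq0 hq1 ht j)
  rwa [hC_zero] at this

lemma hT_tail (ht : 0 ≤ t) (n : ℕ) :
    hT q (q ^ n * t) ≤ 1 + q ^ n * (hT q t - 1) := by
  have hs1 : Summable (hC q t) := hC_summable hq0 hq1 t
  have hs1' : Summable (fun k => hC q t (k + 1)) := (summable_nat_add_iff 1).2 hs1
  have hs2 : Summable (hC q (q ^ n * t)) := hC_summable hq0 hq1 _
  have hs2' : Summable (fun k => hC q (q ^ n * t) (k + 1)) := (summable_nat_add_iff 1).2 hs2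
  have hqn1 : q ^ n ≤ 1 := pow_le_one₀ hq0.le hq1.le
  have hbound : ∀ k, hC q (q ^ n * t) (k + 1) ≤ q ^ n * hC q t (k + 1) := by
    intro k
    rw [hC_scale]
    have : (q ^ n) ^ (k + 1) ≤ q ^ n := by
      calc (q ^ n) ^ (k + 1) ≤ (q ^ n) ^ 1 :=
            pow_le_pow_of_le_one (pow_nonneg hq0.le n) hqn1 (by omega)
        _ = q ^ n := pow_one _
    exact mul_le_mul_of_nonneg_right this (hC_nonneg hq0 hq1 ht _)
  have e1 : hT q (q ^ n * t) = 1 + ∑' k, hC q (q ^ n * t) (k + 1) := by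
    rw [hT, Summable.tsum_eq_zero_add hs2, hC_zero]
  have e2 : hT q t = 1 + ∑' k, hC q t (k + 1) := by
    rw [hT, Summable.tsum_eq_zero_add hs1, hC_zero]
  rw [e1, e2]
  have : ∑' k, hC q (q ^ n * t) (k + 1) ≤ ∑' k, q ^ n * hC q t (k + 1) :=
    Summable.tsum_le_tsum hbound hs2' (hs1'.mul_left _)
  rw [tsum_mul_left] at this
  linarith

lemma hT_tendsto (ht : 0 ≤ t) :
    Tendsto (fun n : ℕ => hT q (q ^ n * t)) atTop (𝓝 1) := by
  have hlow : ∀ n : ℕ, (1:ℝ) ≤ hT q (q ^ n * t) := fun n =>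
    hT_ge_one hq0 hq1 (mul_nonneg (pow_nonneg hq0.le n) ht)
  have hup : Tendsto (fun n : ℕ => 1 + q ^ n * (hT q t - 1)) atTop (𝓝 1) := by
    have : Tendsto (fun n : ℕ => q ^ n * (hT q t - 1)) atTop (𝓝 0) := by
      simpa using (tendsto_pow_atTop_nhds_zero_of_lt_one hq0.le hq1).mul_const (hT q t - 1)
    simpa using this.const_add 1
  exact tendsto_of_tendsto_of_tendsto_of_le_of_le tendsto_const_nhds hup hlow
    (fun n => hT_tail hq0 hq1 ht n)

lemma hT_iterate (n : ℕ) :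
    hT q t = (∏ i ∈ Finset.range n, (1 + t * q ^ i)) * hT q (q ^ n * t) := by
  induction n with
  | zero => simp
  | succ n ih =>
    rw [Finset.prod_range_succ, ih, hT_funeq hq0 hq1 (t := q ^ n * t)]
    rw [show q * (q ^ n * t) = q ^ (n + 1) * t by ring]
    ring

lemma hT_partial_tendsto (ht : 0 ≤ t) :
    Tendsto (fun n : ℕ => ∏ i ∈ Finset.range n, (1 + t * q ^ i)) atTop (𝓝 (hT q t)) := by
  have hne : ∀ n : ℕ, hT q (q ^ n * t) ≠ 0 := fun n =>
    (lt_of_lt_of_le one_pos (hT_ge_one hq0 hq1 (mul_nonneg (pow_nonneg hq0.le n) ht))).ne'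
  have heq : ∀ n : ℕ, ∏ i ∈ Finset.range n, (1 + t * q ^ i) = hT q t / hT q (q ^ n * t) := by
    intro n
    rw [hT_iterate hq0 hq1 (t := t) n, mul_div_assoc, div_self (hne n), mul_one]
  have : Tendsto (fun n : ℕ => hT q t / hT q (q ^ n * t)) atTop (𝓝 (hT q t / 1)) :=
    tendsto_const_nhds.div (hT_tendsto hq0 hq1 ht) one_ne_zero
  rw [div_one] at this
  exact this.congr fun n => (heq n).symm

lemma hT_hasProd (ht : 0 ≤ t) : HasProd (fun i : ℕ => 1 + t * q ^ i) (hT q t) := by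
  set f : ℕ → ℝ := fun i => 1 + t * q ^ i with hf
  have hf1 : ∀ i, (1:ℝ) ≤ f i := fun i => le_add_of_nonneg_right
    (mul_nonneg ht (pow_nonneg hq0.le i))
  set F : Finset ℕ → ℝ := fun s => ∏ i ∈ s, f i with hF
  have hFnonneg : ∀ s, 0 ≤ F s := fun s =>
    Finset.prod_nonneg fun i _ => le_trans zero_le_one (hf1 i)
  have hmono : Monotone F := by
    intro s u hsu
    rw [hF]
    simp only
    rw [← Finset.prod_sdiff hsu]
    have h1 : (1:ℝ) ≤ ∏ i ∈ u \ s, f i := by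
      calc (1:ℝ) = ∏ _i ∈ u \ s, (1:ℝ) := (Finset.prod_const_one).symm
        _ ≤ ∏ i ∈ u \ s, f i :=
            Finset.prod_le_prod (fun i _ => zero_le_one) (fun i _ => hf1 i)
    exact le_mul_of_one_le_left (hFnonneg s) h1
  have hrange : Tendsto (fun n : ℕ => F (Finset.range n)) atTop (𝓝 (hT q t)) :=
    hT_partial_tendsto hq0 hq1 ht
  have hrangemono : Monotone fun n : ℕ => F (Finset.range n) :=
    hmono.comp fun a b hab => Finset.range_subset_range.2 hab
  have hbdd : BddAbove (Set.range F) := by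
    refine ⟨hT q t, ?_⟩
    rintro x ⟨s, rfl⟩
    obtain ⟨n, hn⟩ := s.exists_nat_subset_range
    exact le_trans (hmono hn) (hrangemono.ge_of_tendsto hrange n)
  have htend : Tendsto F atTop (𝓝 (⨆ s, F s)) := tendsto_atTop_ciSup hmono hbdd
  have hcomp : Tendsto (fun n : ℕ => F (Finset.range n)) atTop (𝓝 (⨆ s, F s)) :=
    htend.comp tendsto_finset_range
  have hsup : (⨆ s, F s) = hT q t := tendsto_nhds_unique hcomp hrange
  rw [HasProd, ← hsup]
  exact htend

end more

/-- The deformed value `[x]_{1/q} = (q^{-x}-1)/(q^{-1}-1)`. -/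
noncomputable def qDef (q : ℝ) (x : ℕ) : ℝ := (q⁻¹ ^ x - 1) / (q⁻¹ - 1)

lemma qFact_eq (q : ℝ) (n : ℕ) : qFact q n = hP q n / (1 - q) ^ n := by
  rw [qFact, hP, Finset.prod_div_distrib, Finset.prod_const, Finset.card_range]

/-- **Mean of the deformed Heine variable**: `E([X]_{1/q}) = λ`. -/
theorem heine_deformed_mean (q lam : ℝ) (hq0 : 0 < q) (hq1 : q < 1) (hlam : 0 < lam) :
    ∑' x : ℕ,
      qDef q x * (q ^ (x * (x - 1) / 2) * lam ^ x / qFact q x *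
        (∏' i : ℕ, (1 + lam * (1 - q) * q ^ i))⁻¹) = lam := by
  have hq : (0:ℝ) < 1 - q := sub_pos.2 hq1
  set t : ℝ := lam * (1 - q) with ht
  have ht0 : 0 < t := mul_pos hlam hq
  have hprod : (∏' i : ℕ, (1 + lam * (1 - q) * q ^ i)) = hT q t :=
    (hT_hasProd hq0 hq1 ht0.le).tprod_eq
  have hTpos : (0:ℝ) < hT q t := lt_of_lt_of_le one_pos (hT_ge_one hq0 hq1 ht0.le)
  rw [hprod]
  have hterm : ∀ k : ℕ, qDef q (k + 1) * (q ^ ((k + 1) * ((k + 1) - 1) / 2) * lam ^ (k + 1)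
      / qFact q (k + 1) * (hT q t)⁻¹) = lam * (hT q t)⁻¹ * hC q t k := by
    intro k
    have h1 := (one_sub_pow_pos hq0 hq1 k).ne'
    have h2 := (hP_pos hq0 hq1 k).ne'
    have hq0' : q ≠ 0 := hq0.ne'
    have hdef : qDef q (k + 1) * q ^ k = (1 - q ^ (k + 1)) / (1 - q) := by
      rw [qDef]
      rw [show q⁻¹ - 1 = (1 - q) / q by field_simp]
      rw [inv_pow]
      field_simp
      ring
    rw [exp_succ, pow_add, qFact_eq, hP_succ, hC]
    rw [show qDef q (k + 1) * (q ^ (k * (k - 1) / 2) * q ^ k * lam ^ (k + 1) /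
        (hP q k * (1 - q ^ (k + 1)) / (1 - q) ^ (k + 1)) * (hT q t)⁻¹)
      = (qDef q (k + 1) * q ^ k) * (q ^ (k * (k - 1) / 2) * lam ^ (k + 1) /
        (hP q k * (1 - q ^ (k + 1)) / (1 - q) ^ (k + 1)) * (hT q t)⁻¹) by ring]
    rw [hdef, ht, mul_pow]
    field_simp
    ring
  have hsum1 : Summable (fun k : ℕ => lam * (hT q t)⁻¹ * hC q t k) :=
    (hC_summable hq0 hq1 t).mul_left _
  have hg : Summable (fun x : ℕ => qDef q x * (q ^ (x * (x - 1) / 2) * lam ^ x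
      / qFact q x * (hT q t)⁻¹)) := by
    apply (summable_nat_add_iff 1).mp
    exact hsum1.congr fun k => (hterm k).symm
  rw [Summable.tsum_eq_zero_add hg]
  have h0 : qDef q 0 * (q ^ (0 * (0 - 1) / 2) * lam ^ 0 / qFact q 0 * (hT q t)⁻¹) = 0 := by
    simp [qDef]
  rw [h0, zero_add, tsum_congr hterm, tsum_mul_left]
  show lam * (hT q t)⁻¹ * hT q t = lam
  field_simp
end
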